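/- Let u be the quaternary sequence of length N = 2n generated by Construction I from binary sequences a_0, a_1, a_2, a_3 of odd length n and bits e(0), e(1), e(2). Then for every odd shift τ = 2τ_0 + 1 with 0 ≤ τ_0 < n, setting τ_2 = τ_0 + λ (mod n), R_u(τ) = (−1)^{e(0)}[R_{a_0,a_1}(τ_2) + R_{a_1,a_0}(τ_2) + (−1)^{e(0)+e(1)+e(2)}(R_{a_2,a_3}(τ_2) + R_{a_3,a_2}(τ_2))]/2 + (−1)^{e(2)}[R_{a_0,a_3}(τ_2) − R_{a_3,a_0}(τ_2) + (−1)^{e(0)+e(1)+e(2)}(R_{a_1,a_2}(τ_2) − R_{a_2,a_1}(τ_2))]·ξ/2, where ξ = √−1. -/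

import Mathlib

/-- Cross-correlation of two sequences of length `N` over `ℤ_H`, with `ξ = exp(2πi/H)`. -/
noncomputable def crossCorr (H N : ℕ) (s t : ZMod N → ZMod H) (τ : ZMod N) : ℂ :=
  ∑ i ∈ Finset.range N,
    Complex.exp (2 * (Real.pi : ℂ) * Complex.I / (H : ℂ)) ^ ((s (i : ZMod N) - t ((i : ZMod N) + τ)).val)

/-- Cross-correlation of two binary sequences of length `N` (an integer). -/
def binCorr (N : ℕ) (s t : ZMod N → ZMod 2) (τ : ZMod N) : ℤ :=
  ∑ i ∈ Finset.range N, (-1 : ℤ) ^ ((s (i : ZMod N) + t ((i : ZMod N) + τ)).val)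

/-- Cross-correlation of two quaternary sequences of length `N`, with `ξ = √-1`. -/
noncomputable def quadCorr (N : ℕ) (s t : ZMod N → ZMod 4) (τ : ZMod N) : ℂ :=
  ∑ i ∈ Finset.range N, Complex.I ^ ((s (i : ZMod N) - t ((i : ZMod N) + τ)).val)

/-- Interleaving `u = I(a, b)`: `u(2i) = a(i)`, `u(2i+1) = b(i)`. -/
def interleaveSeq {H : ℕ} (n : ℕ) (a b : ZMod n → ZMod H) : ZMod (2 * n) → ZMod H :=
  fun k => if k.val % 2 = 0 then a ((k.val / 2 : ℕ) : ZMod n) else b ((k.val / 2 : ℕ) : ZMod n)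

/-- The inverse Gray mapping `φ⁻¹ : ℤ₂ × ℤ₂ → ℤ₄`. -/
def grayInv (a b : ZMod 2) : ZMod 4 :=
  if a = 0 then (if b = 0 then 0 else 1) else (if b = 0 then 3 else 2)

/-- Construction I: the quaternary sequence of length `2n` built from
`a₀, a₁, a₂, a₃` and bits `e₀, e₁, e₂`. -/
def constructionI (n : ℕ) (a0 a1 a2 a3 : ZMod n → ZMod 2)
    (e0 e1 e2 : ZMod 2) : ZMod (2 * n) → ZMod 4 :=
  let lam : ZMod n := (((n + 1) / 2 : ℕ) : ZMod n)
  let c := interleaveSeq n a0 (fun i => e0 + a1 (i + lam))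
  let d := interleaveSeq n (fun i => e1 + a2 i) (fun i => e2 + a3 (i + lam))
  fun i => grayInv (c i) (d i)

open Finset

noncomputable def mC (x : ZMod 2) : ℂ := (-1) ^ x.val

lemma mC_add (x y : ZMod 2) : mC (x + y) = mC x * mC y := by
  fin_cases x <;> fin_cases y <;>
    norm_num +decide [mC, show ((1:ZMod 2)).val = 1 from rfl, show ((0:ZMod 2)).val = 0 from rfl,
      show ((1:ZMod 2) + 1) = 0 from rfl, ZMod.val]

lemma mC_sq (x : ZMod 2) : mC x * mC x = 1 := by
  fin_cases x <;>
    norm_num +decide [mC, show ((1:ZMod 2)).val = 1 from rfl, show ((0:ZMod 2)).val = 0 from rfl, ZMod.val]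

lemma key1 (a b c d : ZMod 2) :
    (Complex.I) ^ ((grayInv a b - grayInv c d).val)
      = (mC a * mC c + mC b * mC d)/2 + (mC a * mC d - mC b * mC c) * Complex.I / 2 := by
  have h2 : ∀ x : ZMod 2, x = 0 ∨ x = 1 := by decide
  rcases h2 a with rfl | rfl <;> rcases h2 b with rfl | rfl <;> rcases h2 c with rfl | rfl <;>
    rcases h2 d with rfl | rfl <;>
    norm_num [grayInv, mC, show ((2:ZMod 4)).val = 2 from rfl, show ((3:ZMod 4)).val = 3 from rfl,
      show ((-2:ZMod 4)).val = 2 from rfl, show ((-3:ZMod 4)).val = 1 from rfl,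
      show ((-1:ZMod 4)).val = 3 from rfl,
      show ((1:ZMod 4)).val = 1 from rfl, show ((1:ZMod 2)).val = 1 from rfl,
      Complex.I_sq, pow_succ] <;> ring_nf

lemma key2 (A0 A1 A2 A3 B0 B1 B2 B3 e0 e1 e2 : ZMod 2) :
    Complex.I ^ ((grayInv A0 (e1 + A2) - grayInv (e0 + B1) (e2 + B3)).val)
      + Complex.I ^ ((grayInv (e0 + A1) (e2 + A3) - grayInv B0 (e1 + B2)).val)
    = (-1 : ℂ) ^ e0.val *
        ((mC A0 * mC B1 + mC A1 * mC B0) +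
          (-1 : ℂ) ^ (e0 + e1 + e2).val * (mC A2 * mC B3 + mC A3 * mC B2)) / 2
      + (-1 : ℂ) ^ e2.val *
        ((mC A0 * mC B3 - mC A3 * mC B0) +
          (-1 : ℂ) ^ (e0 + e1 + e2).val * (mC A1 * mC B2 - mC A2 * mC B1)) * Complex.I / 2 := by
  have hm : ∀ x : ZMod 2, ((-1 : ℂ)) ^ x.val = mC x := fun _ => rfl
  rw [key1, key1]
  simp only [hm, mC_add]
  have h0 := mC_sq e0
  have h2 := mC_sq e2
  linear_combination (-(mC e1 * mC e2 * (mC A2 * mC B3 + mC A3 * mC B2)) / 2) * h0 +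
    (-(Complex.I * mC e0 * mC e1 * (mC A1 * mC B2 - mC A2 * mC B1)) / 2) * h2

lemma sum_range_two_mul (n : ℕ) (f : ℕ → ℂ) :
    ∑ i ∈ range (2 * n), f i = ∑ i ∈ range n, (f (2 * i) + f (2 * i + 1)) := by
  induction n with
  | zero => simp
  | succ m ih =>
    rw [Nat.mul_succ, sum_range_succ, sum_range_succ, sum_range_succ, ← ih]
    ring

lemma sum_range_zmod (n : ℕ) [NeZero n] (h : ZMod n → ℂ) :
    ∑ i ∈ range n, h (i : ZMod n) = ∑ x : ZMod n, h x := by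
  refine Finset.sum_nbij' (fun i => (i : ZMod n)) (fun x => x.val) ?_ ?_ ?_ ?_ ?_
  · intro a _; exact mem_univ _
  · intro x _; exact mem_range.2 (ZMod.val_lt x)
  · intro a ha; exact ZMod.val_cast_of_lt (mem_range.1 ha)
  · intro x _; exact ZMod.natCast_rightInverse x
  · intro a _; rfl

lemma sum_shift (n : ℕ) [NeZero n] (s : ZMod n) (h : ZMod n → ℂ) :
    ∑ x : ZMod n, h (x + s) = ∑ x : ZMod n, h x :=
  Equiv.sum_comp (Equiv.addRight s) h

lemma il_even {H : ℕ} (n : ℕ) (hn : 0 < n) (a b : ZMod n → ZMod H) (i : ℕ) :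
    interleaveSeq n a b ((2 * i : ℕ) : ZMod (2 * n)) = a (i : ZMod n) := by
  haveI : NeZero (2 * n) := ⟨by omega⟩
  have hv : ((2 * i : ℕ) : ZMod (2 * n)).val = 2 * (i % n) := by
    rw [ZMod.val_natCast, Nat.mul_mod_mul_left]
  rw [interleaveSeq, hv]
  simp [Nat.mul_div_cancel_left, ZMod.natCast_mod]

lemma il_odd {H : ℕ} (n : ℕ) (hn : 0 < n) (a b : ZMod n → ZMod H) (i : ℕ) :
    interleaveSeq n a b ((2 * i + 1 : ℕ) : ZMod (2 * n)) = b (i : ZMod n) := by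
  haveI : NeZero (2 * n) := ⟨by omega⟩
  have him : i % n < n := Nat.mod_lt i hn
  have hv : ((2 * i + 1 : ℕ) : ZMod (2 * n)).val = 2 * (i % n) + 1 := by
    rw [ZMod.val_natCast]
    conv_lhs => rw [show 2 * i + 1 = (2 * n) * (i / n) + (2 * (i % n) + 1) by
      conv_lhs => rw [show i = n * (i / n) + i % n from (Nat.div_add_mod i n).symm]
      ring]
    rw [Nat.mul_add_mod]
    exact Nat.mod_eq_of_lt (by omega)
  rw [interleaveSeq, hv]
  have h1 : (2 * (i % n) + 1) % 2 = 1 := by omega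
  have h2 : (2 * (i % n) + 1) / 2 = i % n := by omega
  simp [h1, h2, ZMod.natCast_mod]

set_option maxHeartbeats 1000000 in
theorem stmt5 (n : ℕ) (hn : Odd n) (a0 a1 a2 a3 : ZMod n → ZMod 2) (e0 e1 e2 : ZMod 2)
    (u : ZMod (2 * n) → ZMod 4) (hu : u = constructionI n a0 a1 a2 a3 e0 e1 e2)
    (τ0 : ℕ) (hτ0 : τ0 < n) (τ2 : ZMod n)
    (hτ2 : τ2 = (τ0 : ZMod n) + (((n + 1) / 2 : ℕ) : ZMod n)) :
    quadCorr (2 * n) u u ((2 * τ0 + 1 : ℕ) : ZMod (2 * n)) =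
      (-1 : ℂ) ^ e0.val *
          (((binCorr n a0 a1 τ2 + binCorr n a1 a0 τ2 : ℤ) : ℂ) +
            (-1 : ℂ) ^ (e0 + e1 + e2).val *
              ((binCorr n a2 a3 τ2 + binCorr n a3 a2 τ2 : ℤ) : ℂ)) / 2 +
        (-1 : ℂ) ^ e2.val *
          (((binCorr n a0 a3 τ2 - binCorr n a3 a0 τ2 : ℤ) : ℂ) +
            (-1 : ℂ) ^ (e0 + e1 + e2).val *
              ((binCorr n a1 a2 τ2 - binCorr n a2 a1 τ2 : ℤ) : ℂ)) *
          Complex.I / 2 := by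
  have hn0 : 0 < n := hn.pos
  haveI : NeZero n := ⟨hn0.ne'⟩
  haveI : NeZero (2 * n) := ⟨by omega⟩
  set lam : ZMod n := (((n + 1) / 2 : ℕ) : ZMod n) with hlamdef
  have hlam : lam + lam = 1 := by
    have h2 : (n + 1) / 2 + (n + 1) / 2 = n + 1 := by obtain ⟨k, hk⟩ := hn; omega
    rw [hlamdef, ← Nat.cast_add, h2]
    push_cast [ZMod.natCast_self]
    ring
  -- evaluation of u at even and odd points
  have hue : ∀ i : ℕ, u ((2 * i : ℕ) : ZMod (2 * n))
      = grayInv (a0 (i : ZMod n)) (e1 + a2 (i : ZMod n)) := by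
    intro i
    rw [hu]
    simp only [constructionI]
    rw [il_even n hn0, il_even n hn0]
  have huo : ∀ i : ℕ, u ((2 * i + 1 : ℕ) : ZMod (2 * n))
      = grayInv (e0 + a1 ((i : ZMod n) + lam)) (e2 + a3 ((i : ZMod n) + lam)) := by
    intro i
    rw [hu]
    simp only [constructionI]
    rw [il_odd n hn0, il_odd n hn0, ← hlamdef]
  -- the two halves of the interleaved correlation
  set G1 : ZMod n → ℂ := fun x =>
    Complex.I ^ ((grayInv (a0 x) (e1 + a2 x)
      - grayInv (e0 + a1 (x + τ2)) (e2 + a3 (x + τ2))).val) with hG1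
  set G2 : ZMod n → ℂ := fun x =>
    Complex.I ^ ((grayInv (e0 + a1 x) (e2 + a3 x)
      - grayInv (a0 (x + τ2)) (e1 + a2 (x + τ2))).val) with hG2
  have hbin : ∀ (s t : ZMod n → ZMod 2), ((binCorr n s t τ2 : ℤ) : ℂ)
      = ∑ x : ZMod n, mC (s x) * mC (t (x + τ2)) := by
    intro s t
    rw [binCorr]
    push_cast
    rw [sum_range_zmod n (fun x => ((-1 : ℂ)) ^ ((s x + t (x + τ2)).val))]
    exact Finset.sum_congr rfl fun x _ => by rw [← mC_add]; rfl
  calc quadCorr (2 * n) u u ((2 * τ0 + 1 : ℕ) : ZMod (2 * n))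
      = ∑ i ∈ range (2 * n), Complex.I ^
          ((u (i : ZMod (2 * n)) - u ((i : ZMod (2 * n)) + ((2 * τ0 + 1 : ℕ) : ZMod (2 * n)))).val) := by
        rw [quadCorr]
    _ = ∑ i ∈ range n,
          (Complex.I ^ ((u ((2 * i : ℕ) : ZMod (2 * n)) -
              u (((2 * i : ℕ) : ZMod (2 * n)) + ((2 * τ0 + 1 : ℕ) : ZMod (2 * n)))).val) +
           Complex.I ^ ((u ((2 * i + 1 : ℕ) : ZMod (2 * n)) -
              u (((2 * i + 1 : ℕ) : ZMod (2 * n)) + ((2 * τ0 + 1 : ℕ) : ZMod (2 * n)))).val)) :=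
        sum_range_two_mul n _
    _ = ∑ i ∈ range n, (G1 (i : ZMod n) + G2 ((i : ZMod n) + lam)) := by
        refine Finset.sum_congr rfl fun i _ => ?_
        rw [show ((2 * i : ℕ) : ZMod (2 * n)) + ((2 * τ0 + 1 : ℕ) : ZMod (2 * n))
              = ((2 * (i + τ0) + 1 : ℕ) : ZMod (2 * n)) by push_cast; ring,
            show ((2 * i + 1 : ℕ) : ZMod (2 * n)) + ((2 * τ0 + 1 : ℕ) : ZMod (2 * n))
              = ((2 * (i + τ0 + 1) : ℕ) : ZMod (2 * n)) by push_cast; ring,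
            hue i, huo (i + τ0), huo i, hue (i + τ0 + 1),
            show ((i + τ0 : ℕ) : ZMod n) + lam = (i : ZMod n) + τ2 by
              rw [hτ2]; push_cast; ring,
            show ((i + τ0 + 1 : ℕ) : ZMod n) = ((i : ZMod n) + lam) + τ2 by
              rw [hτ2]; push_cast; linear_combination -hlam]
    _ = ∑ x : ZMod n, (G1 x + G2 (x + lam)) := sum_range_zmod n (fun x => G1 x + G2 (x + lam))
    _ = (∑ x : ZMod n, G1 x) + ∑ x : ZMod n, G2 (x + lam) := Finset.sum_add_distrib
    _ = (∑ x : ZMod n, G1 x) + ∑ x : ZMod n, G2 x := by rw [sum_shift n lam G2]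
    _ = ∑ x : ZMod n, (G1 x + G2 x) := Finset.sum_add_distrib.symm
    _ = ∑ x : ZMod n,
          ((-1 : ℂ) ^ e0.val *
              ((mC (a0 x) * mC (a1 (x + τ2)) + mC (a1 x) * mC (a0 (x + τ2))) +
                (-1 : ℂ) ^ (e0 + e1 + e2).val *
                  (mC (a2 x) * mC (a3 (x + τ2)) + mC (a3 x) * mC (a2 (x + τ2)))) / 2 +
            (-1 : ℂ) ^ e2.val *
              ((mC (a0 x) * mC (a3 (x + τ2)) - mC (a3 x) * mC (a0 (x + τ2))) +
                (-1 : ℂ) ^ (e0 + e1 + e2).val *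
                  (mC (a1 x) * mC (a2 (x + τ2)) - mC (a2 x) * mC (a1 (x + τ2)))) *
              Complex.I / 2) :=
        Finset.sum_congr rfl fun x _ =>
          key2 (a0 x) (a1 x) (a2 x) (a3 x)
            (a0 (x + τ2)) (a1 (x + τ2)) (a2 (x + τ2)) (a3 (x + τ2)) e0 e1 e2
    _ = _ := by
        push_cast
        rw [hbin a0 a1, hbin a1 a0, hbin a2 a3, hbin a3 a2,
            hbin a0 a3, hbin a3 a0, hbin a1 a2, hbin a2 a1]
        simp only [Finset.mul_sum, Finset.sum_div, Finset.sum_mul,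
          ← Finset.sum_add_distrib, ← Finset.sum_sub_distrib]
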